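/- For κ ∈ (0,∞) and β ∈ (0,1), with ρ(κ,β) = (1 + 2/κ + β(2+β)κ/(8(1+β)²))·β + 2/κ − β²κ/(8(1+β)²), the value κ = 8(2−√3) is the smallest κ > 0 at which min{λβ, ρ−2} = 1 has a solution with β → 1, i.e., ρ(8(2−√3), 1) = 3. -/

import Mathlib

noncomputable def lamSLE (κ β : ℝ) : ℝ := 1 + 2 / κ + β * (2 + β) * κ / (8 * (1 + β) ^ 2)

noncomputable def zetaSLE (κ β : ℝ) : ℝ := 2 / κ - β ^ 2 * κ / (8 * (1 + β) ^ 2)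

noncomputable def rhoSLE (κ β : ℝ) : ℝ := lamSLE κ β * β + zetaSLE κ β

lemma rho_one (κ : ℝ) (hκ : κ ≠ 0) : rhoSLE κ 1 = 1 + 4 / κ + κ / 16 := by
  simp only [rhoSLE, lamSLE, zetaSLE]
  field_simp
  ring

/-- `ρ(8(2−√3), 1) = 3`, and `8(2−√3)` is the smallest positive `κ` with this
property: for `0 < κ < 8(2−√3)` one has `ρ(κ,1) > 3`. -/
theorem stmt_11 :
    rhoSLE (8 * (2 - Real.sqrt 3)) 1 = 3 ∧
      ∀ κ : ℝ, 0 < κ → κ < 8 * (2 - Real.sqrt 3) → 3 < rhoSLE κ 1 := by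
  have hs : Real.sqrt 3 ^ 2 = 3 := Real.sq_sqrt (by norm_num)
  have hs2 : Real.sqrt 3 < 2 := by
    nlinarith [Real.sqrt_nonneg 3]
  have hs1 : (1:ℝ) < Real.sqrt 3 := by
    nlinarith [Real.sqrt_nonneg 3]
  have hpos : (0:ℝ) < 8 * (2 - Real.sqrt 3) := by nlinarith
  constructor
  · rw [rho_one _ (ne_of_gt hpos)]
    have hne : (2:ℝ) - Real.sqrt 3 ≠ 0 := (by linarith : (0:ℝ) < 2 - Real.sqrt 3).ne'
    field_simp
    nlinarith
  · intro κ hκ hκ'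
    rw [rho_one _ (ne_of_gt hκ)]
    rw [show (3:ℝ) = 1 + 4/κ + κ/16 - ((1 + 4/κ + κ/16) - 3) by ring]
    have h4 : 0 < 4 / κ := by positivity
    have key : (1 + 4 / κ + κ / 16) - 3 = (κ - 8*(2 - Real.sqrt 3)) * (κ - 8*(2 + Real.sqrt 3)) / (16 * κ) := by
      field_simp
      nlinarith
    have : 0 < (κ - 8*(2 - Real.sqrt 3)) * (κ - 8*(2 + Real.sqrt 3)) / (16 * κ) := by
      apply div_pos
      · have h1 : κ - 8*(2 - Real.sqrt 3) < 0 := by linarith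
        have h2 : κ - 8*(2 + Real.sqrt 3) < 0 := by nlinarith
        exact mul_pos_of_neg_of_neg h1 h2
      · linarith
    linarith [key ▸ this]
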